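/- Let A and L be positive bounded operators on a real separable Hilbert space H and λ > 0, and set Q_λ := ‖(L + λI)^{1/2}(A + λI)^{-1/2}‖. Then ‖(A + λI)^{-1/2}(L − A)(A + λI)^{-1/2}‖ ≤ Q_λ^2 · ‖(L + λI)^{-1/2}(L − A)(L + λI)^{-1/2}‖. -/

import Mathlib

open ContinuousLinearMap

/-- `S` is the positive square root of the positive operator `T`. -/
def IsSqrtOf {E : Type*} [NormedAddCommGroup E] [InnerProductSpace ℝ E]
    [CompleteSpace E] (S T : E →L[ℝ] E) : Prop :=
  S.IsPositive ∧ S ∘L S = T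

/-- `S` is the inverse `T⁻¹` of the operator `T`. -/
def IsInvOf {E : Type*} [NormedAddCommGroup E] [InnerProductSpace ℝ E]
    [CompleteSpace E] (S T : E →L[ℝ] E) : Prop :=
  S ∘L T = 1 ∧ T ∘L S = 1

/-- `S` is the inverse square root `T^{-1/2}` of the positive invertible operator `T`,
i.e. `S` is positive and `S ∘ S = T⁻¹`. -/
def IsInvSqrtOf {E : Type*} [NormedAddCommGroup E] [InnerProductSpace ℝ E]
    [CompleteSpace E] (S T : E →L[ℝ] E) : Prop :=
  S.IsPositive ∧ IsInvOf (S ∘L S) T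

/-- `p` is the family of real powers `t ↦ A ^ t` (for `t ≥ 0`) of the positive operator `A`,
given by the continuous functional calculus; it is characterized by the semigroup property
together with positivity, continuity, `p 0 = 1` and `p 1 = A`. -/
def IsPowerFamilyOf {E : Type*} [NormedAddCommGroup E] [InnerProductSpace ℝ E]
    [CompleteSpace E] (A : E →L[ℝ] E) (p : ℝ → E →L[ℝ] E) : Prop :=
  p 0 = 1 ∧ p 1 = A ∧ (∀ s t : ℝ, 0 ≤ s → 0 ≤ t → p (s + t) = p s ∘L p t) ∧
    (∀ t : ℝ, 0 ≤ t → (p t).IsPositive) ∧ ContinuousOn p (Set.Ici (0 : ℝ))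

/-- For positive operators `A`, `L` on `H`, `lam > 0` and
`Q_lam := ‖(L + lam I)^{1/2}(A + lam I)^{-1/2}‖`, one has
`‖(A + lam I)^{-1/2}(L − A)(A + lam I)^{-1/2}‖ ≤ Q_lam^2 ‖(L + lam I)^{-1/2}(L − A)(L + lam I)^{-1/2}‖`. -/
theorem stmt11 {H : Type*} [NormedAddCommGroup H] [InnerProductSpace ℝ H] [CompleteSpace H]
    [TopologicalSpace.SeparableSpace H]
    (A L : H →L[ℝ] H) (hA : A.IsPositive) (hL : L.IsPositive)
    (lam : ℝ) (hlam : 0 < lam)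
    (SAinv : H →L[ℝ] H) (hSAinv : IsInvSqrtOf SAinv (A + lam • (1 : H →L[ℝ] H)))
    (SL : H →L[ℝ] H) (hSL : IsSqrtOf SL (L + lam • (1 : H →L[ℝ] H)))
    (SLinv : H →L[ℝ] H) (hSLinv : IsInvSqrtOf SLinv (L + lam • (1 : H →L[ℝ] H))) :
    ‖SAinv ∘L (L - A) ∘L SAinv‖ ≤ ‖SL ∘L SAinv‖ ^ 2 * ‖SLinv ∘L (L - A) ∘L SLinv‖ := by
  obtain ⟨hSAp, hB1, hB2⟩ := hSAinv
  obtain ⟨hSLp, hSLsq⟩ := hSL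
  obtain ⟨hSLIp, hC1, hC2⟩ := hSLinv
  set C : H →L[ℝ] H := L + lam • (1 : H →L[ℝ] H) with hCdef
  set M : H →L[ℝ] H := L - A with hMdef
  simp only [← ContinuousLinearMap.mul_def] at hC1 hC2 hSLsq ⊢
  have hC1' : SLinv * SLinv * C = 1 := hC1
  have hC2' : C * (SLinv * SLinv) = 1 := hC2
  have hSLsq' : SL * SL = C := hSLsq
  -- stars
  have sSA : star SAinv = SAinv := hSAp.isSelfAdjoint
  have sSL : star SL = SL := hSLp.isSelfAdjoint
  have sSLI : star SLinv = SLinv := hSLIp.isSelfAdjoint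
  have sC : star C = C := by rw [← hSLsq', star_mul, sSL]
  -- key objects
  set N : H →L[ℝ] H := SLinv * M * SLinv with hNdef
  set K : H →L[ℝ] H := SLinv * C * SAinv with hKdef
  set G : H →L[ℝ] H := SL * SAinv with hGdef
  set P : H →L[ℝ] H := SLinv * SL with hPdef
  have sK : star K = SAinv * C * SLinv := by
    rw [hKdef, star_mul, star_mul, sSA, sSLI, sC, mul_assoc]
  -- main identity : SAinv * M * SAinv = star K * N * K
  have key : SAinv * M * SAinv = star K * N * K := by
    rw [sK, hKdef, hNdef]; symm
    calc SAinv * C * SLinv * (SLinv * M * SLinv) * (SLinv * C * SAinv)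
        = SAinv * ((C * (SLinv * SLinv)) * (M * ((SLinv * SLinv * C) * SAinv))) := by
          simp only [mul_assoc]
      _ = SAinv * M * SAinv := by rw [hC2', hC1']; simp only [one_mul, mul_assoc]
  -- K = P * G
  have hKPG : K = P * G := by
    rw [hKdef, hPdef, hGdef, ← hSLsq']
    simp only [mul_assoc]
  -- ‖P‖ ≤ 1
  have hPle : ‖P‖ ≤ 1 := by
    set E : H →L[ℝ] H := star P * P with hEdef
    have sE : star E = E := by simp [hEdef, star_mul]
    have hEidem : E * E = E := by
      have hE2 : E = SL * ((SLinv * SLinv) * SL) := by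
        rw [hEdef, hPdef, star_mul, sSL, sSLI]
        simp only [mul_assoc]
      rw [hE2]
      calc SL * ((SLinv * SLinv) * SL) * (SL * ((SLinv * SLinv) * SL))
          = SL * (SLinv * SLinv) * ((SL * SL) * (SLinv * SLinv)) * SL := by
            simp only [mul_assoc]
        _ = SL * ((SLinv * SLinv) * SL) := by rw [hSLsq', hC2']; simp only [mul_one, mul_assoc]
    have hEnorm : ‖E‖ * ‖E‖ = ‖E‖ := by
      conv_lhs => rw [show ‖E‖ * ‖E‖ = ‖star E * E‖ from CStarRing.norm_star_mul_self.symm]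
      rw [sE, hEidem]
    have hE1 : ‖E‖ ≤ 1 := by nlinarith [norm_nonneg E]
    have hP2 : ‖P‖ * ‖P‖ = ‖E‖ := by
      rw [hEdef]; exact CStarRing.norm_star_mul_self.symm
    nlinarith [norm_nonneg P]
  have h1 : ‖SAinv * M * SAinv‖ ≤ ‖K‖ * ‖N‖ * ‖K‖ := by
    rw [key]
    calc ‖star K * N * K‖ ≤ ‖star K * N‖ * ‖K‖ := norm_mul_le _ _
      _ ≤ ‖star K‖ * ‖N‖ * ‖K‖ := by gcongr; exact norm_mul_le _ _
      _ = ‖K‖ * ‖N‖ * ‖K‖ := by rw [norm_star K]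
  have hK : ‖K‖ ≤ ‖G‖ := by
    calc ‖K‖ = ‖P * G‖ := by rw [hKPG]
      _ ≤ ‖P‖ * ‖G‖ := norm_mul_le _ _
      _ ≤ 1 * ‖G‖ := by gcongr
      _ = ‖G‖ := one_mul _
  have e1 : SAinv * (M * SAinv) = SAinv * M * SAinv := (mul_assoc _ _ _).symm
  have e2 : SLinv * (M * SLinv) = N := by rw [hNdef, mul_assoc]
  rw [e1, e2]
  have hNn : (0:ℝ) ≤ ‖N‖ := norm_nonneg _
  have hGn : (0:ℝ) ≤ ‖G‖ := norm_nonneg _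
  have hKn : (0:ℝ) ≤ ‖K‖ := norm_nonneg _
  calc ‖SAinv * M * SAinv‖ ≤ ‖K‖ * ‖N‖ * ‖K‖ := h1
    _ ≤ ‖G‖ * ‖N‖ * ‖G‖ := by gcongr
    _ = ‖G‖ ^ 2 * ‖N‖ := by ring
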